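/- arXiv:2408.10218 — 4 statements merged into one kernel-verified Lean document; each statement's English description precedes it below -/
import Mathlib

section
/- Let S ⊂ ℝ^p be a finite set and let (S_n) be a sequence of finite subsets of ℝ^p with dist(S_n, S) → 0. Then there exists N ∈ ℕ such that for all n ≥ N one can write S_n = {s_n^1, …, s_n^{|S|}} with lim_{n→∞} s_n^i = s^i ∈ S for each i, where s^i ≠ s^j whenever i ≠ j; moreover, for every s ∈ S there exists a sequence (s_n) with s_n ∈ S_n and lim_{n→∞} s_n = s. -/
open Filter Metric

noncomputable def finsetDist {p : ℕ} (A B : Finset (EuclideanSpace ℝ (Fin p))) : ℝ :=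
  (if A.card = B.card then 0 else 1)
    + ∑ a ∈ A, infDist a (B : Set (EuclideanSpace ℝ (Fin p)))
    + ∑ b ∈ B, infDist b (A : Set (EuclideanSpace ℝ (Fin p)))

lemma finsetDist_facts {p : ℕ} (A B : Finset (EuclideanSpace ℝ (Fin p))) :
    (∀ a ∈ A, infDist a (B : Set (EuclideanSpace ℝ (Fin p))) ≤ finsetDist A B) ∧
    (∀ b ∈ B, infDist b (A : Set (EuclideanSpace ℝ (Fin p))) ≤ finsetDist A B) ∧
    (finsetDist A B < 1 → A.card = B.card) := by
  have h1 : 0 ≤ ∑ a ∈ A, infDist a (B : Set (EuclideanSpace ℝ (Fin p))) :=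
    Finset.sum_nonneg fun _ _ => infDist_nonneg
  have h2 : 0 ≤ ∑ b ∈ B, infDist b (A : Set (EuclideanSpace ℝ (Fin p))) :=
    Finset.sum_nonneg fun _ _ => infDist_nonneg
  have h0 : (0:ℝ) ≤ if A.card = B.card then 0 else 1 := by split <;> norm_num
  refine ⟨fun a ha => ?_, fun b hb => ?_, fun h => ?_⟩
  · have := Finset.single_le_sum (f := fun a => infDist a (B : Set (EuclideanSpace ℝ (Fin p))))
      (fun _ _ => infDist_nonneg) ha
    simp only [finsetDist]; linarith
  · have := Finset.single_le_sum (f := fun b => infDist b (A : Set (EuclideanSpace ℝ (Fin p))))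
      (fun _ _ => infDist_nonneg) hb
    simp only [finsetDist]; linarith
  · by_contra hne
    simp only [finsetDist, if_neg hne] at h
    linarith

lemma sep_exists {p : ℕ} (S : Finset (EuclideanSpace ℝ (Fin p))) :
    ∃ ε : ℝ, 0 < ε ∧ ∀ x ∈ S, ∀ y ∈ S, x ≠ y → 3*ε ≤ dist x y := by
  classical
  by_cases hTn : ((S ×ˢ S).filter (fun q => q.1 ≠ q.2)).Nonempty
  · refine ⟨(((S ×ˢ S).filter (fun q => q.1 ≠ q.2)).inf' hTn fun q => dist q.1 q.2) / 3, ?_, ?_⟩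
    · have : 0 < ((S ×ˢ S).filter (fun q => q.1 ≠ q.2)).inf' hTn fun q => dist q.1 q.2 := by
        rw [Finset.lt_inf'_iff]
        intro q hq
        exact dist_pos.2 ((Finset.mem_filter.1 hq).2)
      linarith
    · intro x hx y hy hxy
      have hmem : (x, y) ∈ (S ×ˢ S).filter (fun q => q.1 ≠ q.2) := by
        simp only [Finset.mem_filter, Finset.mem_product]
        exact ⟨⟨hx, hy⟩, hxy⟩
      have h := Finset.inf'_le (fun q : _ × _ => dist q.1 q.2) hmem
      simp only at h
      linarith
  · refine ⟨1, one_pos, fun x hx y hy hxy => absurd ⟨(x,y), ?_⟩ hTn⟩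
    simp only [Finset.mem_filter, Finset.mem_product]
    exact ⟨⟨hx, hy⟩, hxy⟩

/-- If `S` is a finite subset of `ℝ^p` and `Sn` is a sequence of finite
subsets with `dist(Sn n, S) → 0`, then for some `N` and all `n ≥ N` one can enumerate
`Sn n = {s 0 n, …, s (|S|-1) n}` (an injective enumeration), each `fun n => s i n`
converging to a point `L i ∈ S` with `L` injective; moreover every `x ∈ S` is the limit
of a sequence of points `t n ∈ Sn n`. -/
theorem stmt1 {p : ℕ} (S : Finset (EuclideanSpace ℝ (Fin p)))
    (Sn : ℕ → Finset (EuclideanSpace ℝ (Fin p)))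
    (hconv : Tendsto (fun n => finsetDist (Sn n) S) atTop (nhds 0)) :
    ∃ N : ℕ, ∃ s : Fin S.card → ℕ → EuclideanSpace ℝ (Fin p),
      ∃ L : Fin S.card → EuclideanSpace ℝ (Fin p),
      (∀ n ≥ N, Function.Injective (fun i => s i n) ∧
        (Sn n : Set (EuclideanSpace ℝ (Fin p))) = Set.range (fun i => s i n)) ∧
      (∀ i, L i ∈ S ∧ Tendsto (fun n => s i n) atTop (nhds (L i))) ∧
      Function.Injective L ∧
      (∀ x ∈ S, ∃ t : ℕ → EuclideanSpace ℝ (Fin p),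
        (∀ n ≥ N, t n ∈ Sn n) ∧ Tendsto t atTop (nhds x)) := by
  classical
  obtain ⟨ε, hε0, hsep⟩ := sep_exists S
  obtain ⟨N, hN⟩ : ∃ N, ∀ n ≥ N, finsetDist (Sn n) S < min ε 1 :=
    eventually_atTop.1 (hconv.eventually_lt_const (lt_min hε0 one_pos))
  have hNε : ∀ n ≥ N, finsetDist (Sn n) S < ε := fun n hn => (hN n hn).trans_le (min_le_left _ _)
  have hcard : ∀ n ≥ N, (Sn n).card = S.card := fun n hn =>
    (finsetDist_facts (Sn n) S).2.2 ((hN n hn).trans_le (min_le_right _ _))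
  have hSnne : ∀ i : Fin S.card, ∀ n ≥ N, (Sn n).Nonempty := by
    intro i n hn
    rw [← Finset.card_pos, hcard n hn]
    exact i.pos
  set e := S.equivFin with he
  set L : Fin S.card → EuclideanSpace ℝ (Fin p) :=
    fun i => (e.symm i : EuclideanSpace ℝ (Fin p)) with hL
  have hLmem : ∀ i, L i ∈ S := fun i => (e.symm i).2
  have hLinj : Function.Injective L := fun i j h => e.symm.injective (Subtype.ext h)
  have hnear : ∀ (x : EuclideanSpace ℝ (Fin p)) (n : ℕ),
      ∃ y, (Sn n).Nonempty → y ∈ Sn n ∧ ∀ z ∈ Sn n, dist x y ≤ dist x z := by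
    intro x n
    by_cases h : (Sn n).Nonempty
    · obtain ⟨b, hb, hbm⟩ := (Sn n).exists_min_image (fun a => dist x a) h
      exact ⟨b, fun _ => ⟨hb, hbm⟩⟩
    · exact ⟨0, fun h' => absurd h' h⟩
  choose nearest hnearest using hnear
  set s : Fin S.card → ℕ → EuclideanSpace ℝ (Fin p) := fun i n => nearest (L i) n with hs
  -- key distance bound
  have hkey : ∀ (i : Fin S.card), ∀ n ≥ N, dist (L i) (s i n) ≤ finsetDist (Sn n) S := by
    intro i n hn
    have hne := hSnne i n hn
    obtain ⟨hmem, hmin⟩ := hnearest (L i) n hne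
    have h1 : dist (L i) (s i n) ≤ infDist (L i) ((Sn n : Set (EuclideanSpace ℝ (Fin p)))) := by
      by_contra hc
      push_neg at hc
      obtain ⟨y, hy, hylt⟩ := (infDist_lt_iff (by exact_mod_cast hne.to_set)).1 hc
      exact absurd (hmin y (by exact_mod_cast hy)) (not_le.2 hylt)
    exact h1.trans ((finsetDist_facts (Sn n) S).2.1 (L i) (hLmem i))
  have hmem : ∀ (i : Fin S.card), ∀ n ≥ N, s i n ∈ Sn n := fun i n hn =>
    (hnearest (L i) n (hSnne i n hn)).1
  have htend : ∀ i, Tendsto (fun n => s i n) atTop (nhds (L i)) := by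
    intro i
    rw [tendsto_iff_dist_tendsto_zero]
    refine squeeze_zero' (Eventually.of_forall fun n => dist_nonneg) ?_ hconv
    filter_upwards [eventually_ge_atTop N] with n hn
    rw [dist_comm]
    exact hkey i n hn
  have hinj : ∀ n ≥ N, Function.Injective (fun i => s i n) := by
    intro n hn i j hij
    by_contra hne
    have h3 : 3*ε ≤ dist (L i) (L j) :=
      hsep _ (hLmem i) _ (hLmem j) (fun h => hne (hLinj h))
    have : dist (L i) (L j) ≤ dist (L i) (s i n) + dist (s j n) (L j) := by
      have : (fun i => s i n) i = (fun i => s i n) j := hij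
      simp only at this
      calc dist (L i) (L j) ≤ dist (L i) (s i n) + dist (s i n) (L j) := dist_triangle _ _ _
        _ = dist (L i) (s i n) + dist (s j n) (L j) := by rw [this]
    have h1 := hkey i n hn
    have h2 := hkey j n hn
    rw [dist_comm] at h2
    have := hNε n hn
    linarith
  have himg : ∀ n ≥ N, Finset.image (fun i => s i n) Finset.univ = Sn n := by
    intro n hn
    have hsub : Finset.image (fun i => s i n) Finset.univ ⊆ Sn n := by
      intro a ha
      obtain ⟨i, _, rfl⟩ := Finset.mem_image.1 ha
      exact hmem i n hn
    have hcardimg : (Finset.image (fun i => s i n) Finset.univ).card = S.card := by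
      rw [Finset.card_image_of_injective _ (hinj n hn), Finset.card_univ, Fintype.card_fin]
    exact (Finset.eq_of_subset_of_card_le hsub (by rw [hcardimg, hcard n hn])).symm ▸ rfl
  refine ⟨N, s, L, fun n hn => ⟨hinj n hn, ?_⟩, fun i => ⟨hLmem i, htend i⟩, hLinj, ?_⟩
  · ext a
    simp only [Finset.mem_coe, Set.mem_range, ← himg n hn, Finset.mem_image, Finset.mem_univ,
      true_and]
  · intro x hx
    refine ⟨fun n => s (e ⟨x, hx⟩) n, fun n hn => hmem _ n hn, ?_⟩
    have h := htend (e ⟨x, hx⟩)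
    have hLx : L (e ⟨x, hx⟩) = x := by simp [hL]
    rwa [hLx] at h
end

section
/- A polynomial function on ℝ^n (i.e. a real multivariate polynomial in n variables), for any n ∈ ℕ, is either identically zero or its zero set {x ∈ ℝ^n : P(x) = 0} has Lebesgue measure zero. -/
open MeasureTheory MvPolynomial

lemma stmt4_aux (n : ℕ) (P : MvPolynomial (Fin n) ℝ) (hP : P ≠ 0) :
    MeasureTheory.volume {x : Fin n → ℝ | MvPolynomial.eval x P = 0} = 0 := by
  induction n with
  | zero =>
    have hempty : {x : Fin 0 → ℝ | eval x P = 0} = ∅ := by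
      ext x
      simp only [Set.mem_setOf_eq, Set.mem_empty_iff_false, iff_false]
      intro h
      apply hP
      rw [MvPolynomial.eq_C_of_isEmpty P, eval_C] at h
      rw [MvPolynomial.eq_C_of_isEmpty P, h, map_zero]
    rw [hempty, measure_empty]
  | succ n ih =>
    set Q : Polynomial (MvPolynomial (Fin n) ℝ) := finSuccEquiv ℝ n P with hQ
    have hQ0 : Q ≠ 0 := by
      intro h
      rw [hQ] at h
      exact hP ((map_eq_zero_iff _ (AlgEquiv.injective _)).mp h)
    obtain ⟨k, hks⟩ := Polynomial.support_nonempty.mpr hQ0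
    have hk : Q.coeff k ≠ 0 := Polynomial.mem_support_iff.mp hks
    set S : Set ((Fin n → ℝ) × ℝ) :=
      {p : (Fin n → ℝ) × ℝ | Polynomial.eval p.2 (Polynomial.map (eval p.1) Q) = 0} with hS
    have hcont : Continuous fun p : (Fin n → ℝ) × ℝ =>
        Polynomial.eval p.2 (Polynomial.map (eval p.1) Q) := by
      have heq : ∀ p : (Fin n → ℝ) × ℝ,
          Polynomial.eval p.2 (Polynomial.map (eval p.1) Q)
            = ∑ j ∈ Q.support, eval p.1 (Q.coeff j) * p.2 ^ j := by
        intro p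
        rw [Polynomial.eval_map, Polynomial.eval₂_eq_sum, Polynomial.sum_def]
      simp only [heq]
      exact continuous_finset_sum _ fun j _ =>
        ((MvPolynomial.continuous_eval (Q.coeff j)).comp continuous_fst).mul
          (continuous_snd.pow j)
    have hSm : MeasurableSet S := by
      have : S = (fun p : (Fin n → ℝ) × ℝ =>
          Polynomial.eval p.2 (Polynomial.map (eval p.1) Q)) ⁻¹' {0} := rfl
      rw [this]
      exact hcont.measurable (measurableSet_singleton 0)
    have key : ∀ x : Fin (n + 1) → ℝ,
        eval x P = Polynomial.eval (x 0)
          (Polynomial.map (eval fun j => x ((0 : Fin (n + 1)).succAbove j)) Q) := by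
      intro x
      have htail : (Fin.tail x) = fun j => x ((0 : Fin (n + 1)).succAbove j) := by
        funext j
        rw [Fin.zero_succAbove]
        rfl
      conv_lhs => rw [← Fin.cons_self_tail x]
      rw [eval_eq_eval_mv_eval', htail, hQ]
    set e := MeasurableEquiv.piFinSuccAbove (fun _ : Fin (n + 1) => ℝ) 0 with he
    have hsetEq : {x : Fin (n + 1) → ℝ | eval x P = 0}
        = e ⁻¹' (Prod.swap ⁻¹' S) := by
      ext x
      simp only [Set.mem_setOf_eq, Set.mem_preimage, hS]
      rw [key x]
      rfl
    have hmp := volume_preserving_piFinSuccAbove (fun _ : Fin (n + 1) => ℝ) 0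
    rw [hsetEq, hmp.measure_preimage (hSm.preimage measurable_swap).nullMeasurableSet]
    have hswap : (volume : Measure (ℝ × (Fin n → ℝ))) (Prod.swap ⁻¹' S)
        = (volume : Measure ((Fin n → ℝ) × ℝ)) S := by
      rw [Measure.volume_eq_prod, Measure.volume_eq_prod]
      exact Measure.measurePreserving_swap.measure_preimage hSm.nullMeasurableSet
    rw [hswap, Measure.volume_eq_prod, Measure.measure_prod_null hSm]
    have hcoef : volume {y : Fin n → ℝ | eval y (Q.coeff k) = 0} = 0 := ih _ hk
    have hae : ∀ᵐ y : Fin n → ℝ, eval y (Q.coeff k) ≠ 0 := by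
      rw [ae_iff]
      simpa using hcoef
    filter_upwards [hae] with y hy
    have hQy : Polynomial.map (eval y) Q ≠ 0 := by
      intro h
      apply hy
      have := congrArg (fun q => Polynomial.coeff q k) h
      simpa [Polynomial.coeff_map] using this
    have hfin : Set.Finite {t : ℝ | Polynomial.eval t (Polynomial.map (eval y) Q) = 0} :=
      Polynomial.finite_setOf_isRoot hQy
    have : (Prod.mk y ⁻¹' S) = {t : ℝ | Polynomial.eval t (Polynomial.map (eval y) Q) = 0} :=
      rfl
    simp only [Pi.zero_apply, this]
    exact hfin.measure_zero _

/-- A real multivariate polynomial in `n` variables is either identically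
zero or its zero set in `ℝ^n` has Lebesgue measure zero. -/
theorem stmt4 (n : ℕ) (P : MvPolynomial (Fin n) ℝ) :
    P = 0 ∨ MeasureTheory.volume {x : Fin n → ℝ | MvPolynomial.eval x P = 0} = 0 := by
  by_cases h : P = 0
  · exact Or.inl h
  · exact Or.inr (stmt4_aux n P h)
end

section
/- Suppose A is a real p×p matrix of rank p−1 such that its last row A_{p,·} is linearly independent of every subset of p−2 other rows of A, and let A_{p,·} = Σ_{u=1}^{p−1} c_u A_{u,·} be the unique decomposition of the last row in span{A_{1,·}, …, A_{p−1,·}}. Let (A(n)) be a sequence of real p×p matrices, each of rank p−1 and each with the property that A_{p,·}(n) is linearly independent of every subset of p−2 other rows of A(n), such that ‖A − A(n)‖ → 0 (for any matrix norm ‖·‖), and let A_{p,·}(n) = Σ_{u=1}^{p−1} c_u(n) A_{u,·}(n) be the corresponding unique decompositions. Then c_u(n) → c_u as n → ∞ for each u = 1, …, p−1. -/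
open Filter

open Matrix

set_option maxHeartbeats 1000000

lemma stmt9_vecMul (p : ℕ) (hp : 2 ≤ p) (M : Matrix (Fin p) (Fin p) ℝ) (d : Fin (p - 1) → ℝ)
    (hd : M ⟨p - 1, by omega⟩ = ∑ u : Fin (p - 1), d u • M (Fin.castLE (Nat.sub_le p 1) u)) :
    M ⟨p - 1, by omega⟩ = Matrix.vecMul d (M.submatrix (Fin.castLE (Nat.sub_le p 1)) id) := by
  funext j
  have := congrFun hd j
  simpa [Matrix.vecMul, dotProduct, Finset.sum_apply] using this

lemma stmt9_formula (p : ℕ) (hp : 2 ≤ p) (M : Matrix (Fin p) (Fin p) ℝ) (d : Fin (p - 1) → ℝ)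
    (hd : M ⟨p - 1, by omega⟩ = ∑ u : Fin (p - 1), d u • M (Fin.castLE (Nat.sub_le p 1) u))
    (hdet : (M.submatrix (Fin.castLE (Nat.sub_le p 1)) id *
        (M.submatrix (Fin.castLE (Nat.sub_le p 1)) id)ᵀ).det ≠ 0) :
    d = Matrix.vecMul
        (Matrix.vecMul (M ⟨p - 1, by omega⟩) (M.submatrix (Fin.castLE (Nat.sub_le p 1)) id)ᵀ)
        (M.submatrix (Fin.castLE (Nat.sub_le p 1)) id *
          (M.submatrix (Fin.castLE (Nat.sub_le p 1)) id)ᵀ)⁻¹ := by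
  rw [stmt9_vecMul p hp M d hd, Matrix.vecMul_vecMul, Matrix.vecMul_vecMul,
    ← Matrix.mul_assoc, Matrix.mul_nonsing_inv _ (isUnit_iff_ne_zero.mpr hdet),
    Matrix.vecMul_one]


/-- Let `A` be a real `p×p` matrix of rank `p−1` whose last row lies
outside the span of every set of `p−2` other rows, and let
`A_{p,·} = Σ_{u<p-1} c_u A_{u,·}` be the (unique) decomposition of its last row in the
span of the first `p−1` rows.  If `A n → A` is a sequence of `p×p` matrices with the same
two properties, with decompositions `A_{p,·}(n) = Σ_u c_u(n) A_{u,·}(n)`, then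
`c_u(n) → c_u` for every `u`.  (Convergence of matrices is entrywise, which by
equivalence of all matrix norms on a finite-dimensional space is convergence in any
matrix norm.) -/
theorem stmt9 (p : ℕ) (hp : 2 ≤ p) (A : Matrix (Fin p) (Fin p) ℝ)
    (hrank : A.rank = p - 1)
    (hindep : ∀ s : Finset (Fin p), s.card = p - 2 → (⟨p - 1, by omega⟩ : Fin p) ∉ s →
      A ⟨p - 1, by omega⟩ ∉ Submodule.span ℝ ((fun i => A i) '' ↑s))
    (c : Fin (p - 1) → ℝ)
    (hc : A ⟨p - 1, by omega⟩ =
      ∑ u : Fin (p - 1), c u • A (Fin.castLE (Nat.sub_le p 1) u))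
    (An : ℕ → Matrix (Fin p) (Fin p) ℝ)
    (hAnrank : ∀ n, (An n).rank = p - 1)
    (hAnindep : ∀ n, ∀ s : Finset (Fin p), s.card = p - 2 →
      (⟨p - 1, by omega⟩ : Fin p) ∉ s →
      An n ⟨p - 1, by omega⟩ ∉ Submodule.span ℝ ((fun i => An n i) '' ↑s))
    (cn : ℕ → Fin (p - 1) → ℝ)
    (hcn : ∀ n, An n ⟨p - 1, by omega⟩ =
      ∑ u : Fin (p - 1), cn n u • An n (Fin.castLE (Nat.sub_le p 1) u))
    (hconv : Tendsto An atTop (nhds A)) :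
    ∀ u : Fin (p - 1), Tendsto (fun n => cn n u) atTop (nhds (c u)) := by
  classical
  have hp1 : p - 1 < p := by omega
  set q : Fin p := ⟨p - 1, hp1⟩ with hq
  set Bf : Matrix (Fin p) (Fin p) ℝ → Matrix (Fin (p - 1)) (Fin p) ℝ :=
    fun M => M.submatrix (Fin.castLE (Nat.sub_le p 1)) id with hBf
  set B : Matrix (Fin (p - 1)) (Fin p) ℝ := Bf A with hB
  -- rows of B span the same space as rows of A
  have hspan : Submodule.span ℝ (Set.range B) = Submodule.span ℝ (Set.range A) := by
    apply le_antisymm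
    · refine Submodule.span_mono ?_
      rintro _ ⟨u, rfl⟩
      exact ⟨Fin.castLE (Nat.sub_le p 1) u, rfl⟩
    · rw [Submodule.span_le]
      rintro _ ⟨i, rfl⟩
      by_cases h : (i : ℕ) < p - 1
      · have : A i = B ⟨i, h⟩ := rfl
        rw [this]
        exact Submodule.subset_span ⟨_, rfl⟩
      · have hi : i = q := Fin.ext (by have := i.isLt; simp [hq]; omega)
        rw [hi]
        rw [show A q = ∑ u : Fin (p - 1), c u • A (Fin.castLE (Nat.sub_le p 1) u) from hc]
        refine Submodule.sum_mem _ fun u _ => Submodule.smul_mem _ _ ?_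
        exact Submodule.subset_span ⟨u, rfl⟩
  -- rows of B are linearly independent
  have hfin : Module.finrank ℝ (Submodule.span ℝ (Set.range B)) = p - 1 := by
    rw [hspan]; exact (Matrix.rank_eq_finrank_span_row A).symm.trans hrank
  have hBli : LinearIndependent ℝ B := by
    refine linearIndependent_iff_card_eq_finrank_span.mpr ?_
    simpa [Set.finrank] using hfin.symm
  -- the Gram matrix is invertible
  set G : Matrix (Fin (p - 1)) (Fin (p - 1)) ℝ := B * Bᵀ with hG
  have hdet : G.det ≠ 0 := by
    intro h0
    obtain ⟨v, hv, hGv⟩ := Matrix.exists_mulVec_eq_zero_iff.mpr h0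
    have hker : v ∈ LinearMap.ker (Bᵀ).mulVecLin := by
      have hk := Matrix.ker_mulVecLin_transpose_mul_self Bᵀ
      rw [Matrix.transpose_transpose] at hk
      rw [← hk]
      show (B * Bᵀ).mulVecLin v = 0
      rw [Matrix.mulVecLin_apply]
      exact hGv
    have hBv : Bᵀ.mulVec v = 0 := by
      have : (Bᵀ).mulVecLin v = 0 := hker
      rwa [Matrix.mulVecLin_apply] at this
    refine hv ?_
    funext u
    refine Fintype.linearIndependent_iff.mp hBli v ?_ u
    funext j
    have := congrFun hBv j
    simpa [Matrix.mulVec, dotProduct, Finset.sum_apply, mul_comm] using this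
  -- the limit coefficient formula
  have hcF : c = Matrix.vecMul (Matrix.vecMul (A q) Bᵀ) G⁻¹ :=
    stmt9_formula p hp A c hc hdet
  -- continuity
  have hBfc : Continuous Bf := continuous_id.matrix_submatrix _ _
  have hGc : Continuous fun M => Bf M * (Bf M)ᵀ := hBfc.matrix_mul hBfc.matrix_transpose
  have hGn : Tendsto (fun n => Bf (An n) * (Bf (An n))ᵀ) atTop (nhds G) :=
    (hGc.tendsto A).comp hconv
  have hinvc : ContinuousAt Inv.inv G := by
    refine continuousAt_matrix_inv G ?_
    rw [Ring.inverse_eq_inv']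
    exact continuousAt_inv₀ hdet
  have hinvn : Tendsto (fun n => (Bf (An n) * (Bf (An n))ᵀ)⁻¹) atTop (nhds G⁻¹) :=
    hinvc.tendsto.comp hGn
  have hrowc : Continuous fun M : Matrix (Fin p) (Fin p) ℝ => M q :=
    continuous_pi fun j => continuous_id.matrix_elem q j
  have hwc : Continuous fun M : Matrix (Fin p) (Fin p) ℝ => Matrix.vecMul (M q) (Bf M)ᵀ :=
    hrowc.matrix_vecMul hBfc.matrix_transpose
  have hwn : Tendsto (fun n => Matrix.vecMul (An n q) (Bf (An n))ᵀ) atTop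
      (nhds (Matrix.vecMul (A q) Bᵀ)) := (hwc.tendsto A).comp hconv
  have hFn : Tendsto
      (fun n => Matrix.vecMul (Matrix.vecMul (An n q) (Bf (An n))ᵀ)
        (Bf (An n) * (Bf (An n))ᵀ)⁻¹) atTop (nhds c) := by
    rw [hcF]
    exact ((continuous_fst.matrix_vecMul continuous_snd).tendsto _).comp
      (hwn.prodMk_nhds hinvn)
  -- eventual equality
  have hdetn : Tendsto (fun n => (Bf (An n) * (Bf (An n))ᵀ).det) atTop (nhds G.det) :=
    ((continuous_id.matrix_det).tendsto G).comp hGn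
  have hev : ∀ᶠ n in atTop, (Bf (An n) * (Bf (An n))ᵀ).det ≠ 0 := hdetn.eventually_ne hdet
  have heq : ∀ᶠ n in atTop,
      (fun n => Matrix.vecMul (Matrix.vecMul (An n q) (Bf (An n))ᵀ)
        (Bf (An n) * (Bf (An n))ᵀ)⁻¹) n = cn n := by
    filter_upwards [hev] with n hn
    exact (stmt9_formula p hp (An n) (cn n) (hcn n) hn).symm
  intro u
  refine Tendsto.congr' ?_ (((continuous_apply u).tendsto c).comp hFn)
  filter_upwards [heq] with n hn
  exact congrFun hn u
end

section
/- Let Y_1, …, Y_k be square-integrable real random variables and X_1, …, X_k random vectors in ℝ^p with square-integrable entries, with each G^u = E[X_u X_u^T] positive definite, and let R_u(β) = E[(Y_u − βX_u)^2]. Let κ_i, κ_j ≥ 0 and w_i, w_j ∈ ℝ^k be weight vectors, each either entrywise nonnegative with a positive entry or entrywise nonpositive with a negative entry, and suppose at least one of w_i, w_j is of the nonnegative type. Set f_i(β) = κ_i + Σ_u w_i(u) R_u(β) and f_j(β) = κ_j + Σ_u w_j(u) R_u(β). If the intersection set K = {β ∈ ℝ^p : f_i(β) = f_j(β)} is nonempty,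 then f_i attains its infimum on K: there exists β* ∈ K with f_i(β*) = inf_{β∈K} f_i(β). -/
open MeasureTheory

/-- With risks `R_u(β) = E[(Y_u − βX_u)²]` built from square-integrable
data with positive definite second-moment matrices, and two affine combinations
`f_i(β) = κ_i + Σ_u w_i(u) R_u(β)`, `f_j(β) = κ_j + Σ_u w_j(u) R_u(β)` whose weight
vectors are each either entrywise nonnegative with a positive entry or entrywise
nonpositive with a negative entry, at least one of the two of the nonnegative type:
if the intersection set `K = {β : f_i(β) = f_j(β)}` is nonempty, then `f_i` attains
its infimum on `K`. -/
theorem stmt15 {Ω : Type*} [MeasurableSpace Ω] {μ : Measure Ω} [IsProbabilityMeasure μ]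
    (p k : ℕ)
    (Y : Fin k → Ω → ℝ) (hY : ∀ u, MemLp (Y u) 2 μ)
    (X : Fin k → Ω → Fin p → ℝ) (hX : ∀ u i, MemLp (fun ω => X u ω i) 2 μ)
    (hG : ∀ u : Fin k,
      (Matrix.of fun i j : Fin p => ∫ ω, X u ω i * X u ω j ∂μ).PosDef)
    (κi κj : ℝ) (hκi : 0 ≤ κi) (hκj : 0 ≤ κj) (wi wj : Fin k → ℝ)
    (hwi : ((∀ u, 0 ≤ wi u) ∧ ∃ u, 0 < wi u) ∨ ((∀ u, wi u ≤ 0) ∧ ∃ u, wi u < 0))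
    (hwj : ((∀ u, 0 ≤ wj u) ∧ ∃ u, 0 < wj u) ∨ ((∀ u, wj u ≤ 0) ∧ ∃ u, wj u < 0))
    (hpos : ((∀ u, 0 ≤ wi u) ∧ ∃ u, 0 < wi u) ∨ ((∀ u, 0 ≤ wj u) ∧ ∃ u, 0 < wj u))
    (fi fj : (Fin p → ℝ) → ℝ)
    (hfi : ∀ β, fi β = κi + ∑ u, wi u * ∫ ω, (Y u ω - ∑ l, β l * X u ω l) ^ 2 ∂μ)
    (hfj : ∀ β, fj β = κj + ∑ u, wj u * ∫ ω, (Y u ω - ∑ l, β l * X u ω l) ^ 2 ∂μ)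
    (hK : {β : Fin p → ℝ | fi β = fj β}.Nonempty) :
    ∃ βstar ∈ {β : Fin p → ℝ | fi β = fj β},
      ∀ β ∈ {β : Fin p → ℝ | fi β = fj β}, fi βstar ≤ fi β := by
  classical
  -- trivial case p = 0
  rcases Nat.eq_zero_or_pos p with hp | hp
  · subst hp
    obtain ⟨β₀, hβ₀⟩ := hK
    refine ⟨β₀, hβ₀, fun β _ => le_of_eq ?_⟩
    have : β₀ = β := funext fun l => l.elim0
    rw [this]
  -- notation
  set R : Fin k → (Fin p → ℝ) → ℝ :=
    fun u β => ∫ ω, (Y u ω - ∑ l, β l * X u ω l) ^ 2 ∂μ with hRdef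
  have hmul : ∀ {f g : Ω → ℝ}, MemLp f 2 μ → MemLp g 2 μ →
      Integrable (fun ω => f ω * g ω) μ := by
    intro f g hf hg
    have h : MemLp (f • g) 1 μ := MemLp.smul hg hf
    have := memLp_one_iff_integrable.mp h
    simpa [Pi.smul_apply, smul_eq_mul, Pi.mul_def] using this
  set A : Fin k → ℝ := fun u => ∫ ω, Y u ω ^ 2 ∂μ with hAdef
  set c : Fin k → Fin p → ℝ := fun u l => ∫ ω, Y u ω * X u ω l ∂μ with hcdef
  set G : Fin k → Fin p → Fin p → ℝ := fun u l m => ∫ ω, X u ω l * X u ω m ∂μ with hGdef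
  have hYX : ∀ u l, Integrable (fun ω => Y u ω * X u ω l) μ := fun u l => hmul (hY u) (hX u l)
  have hXX : ∀ u l m, Integrable (fun ω => X u ω l * X u ω m) μ :=
    fun u l m => hmul (hX u l) (hX u m)
  -- expansion of the quadratic risks
  have key : ∀ u β, R u β
      = A u - 2 * ∑ l, β l * c u l + ∑ l, ∑ m, β l * β m * G u l m := by
    intro u β
    have h1 : ∀ ω, (Y u ω - ∑ l, β l * X u ω l) ^ 2
        = Y u ω ^ 2 - 2 * ∑ l, β l * (Y u ω * X u ω l)
          + ∑ l, ∑ m, β l * β m * (X u ω l * X u ω m) := by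
      intro ω
      have e1 : (∑ l, β l * X u ω l) ^ 2
          = ∑ l, ∑ m, β l * β m * (X u ω l * X u ω m) := by
        rw [sq, Finset.sum_mul_sum]
        exact Finset.sum_congr rfl fun l _ => Finset.sum_congr rfl fun m _ => by ring
      have e2 : Y u ω * ∑ l, β l * X u ω l = ∑ l, β l * (Y u ω * X u ω l) := by
        rw [Finset.mul_sum]; exact Finset.sum_congr rfl fun l _ => by ring
      rw [sub_sq, e1, mul_assoc, e2]
    have hY2 : Integrable (fun ω => Y u ω ^ 2) μ := (hY u).integrable_sq
    have hsum1 : Integrable (fun ω => ∑ l, β l * (Y u ω * X u ω l)) μ :=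
      integrable_finset_sum _ fun l _ => (hYX u l).const_mul _
    have hsum2 : Integrable (fun ω => ∑ l, ∑ m, β l * β m * (X u ω l * X u ω m)) μ :=
      integrable_finset_sum _ fun l _ =>
        integrable_finset_sum _ fun m _ => (hXX u l m).const_mul _
    have hsum1' : Integrable (fun ω => 2 * ∑ l, β l * (Y u ω * X u ω l)) μ :=
      hsum1.const_mul 2
    have ha : Integrable
        (fun ω => Y u ω ^ 2 - 2 * ∑ l, β l * (Y u ω * X u ω l)) μ := hY2.sub hsum1'
    calc R u β = ∫ ω, (Y u ω ^ 2 - 2 * ∑ l, β l * (Y u ω * X u ω l)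
          + ∑ l, ∑ m, β l * β m * (X u ω l * X u ω m)) ∂μ :=
        integral_congr_ae (ae_of_all _ h1)
      _ = A u - 2 * ∑ l, β l * c u l + ∑ l, ∑ m, β l * β m * G u l m := by
        rw [integral_add ha hsum2,
          integral_sub hY2 hsum1', integral_const_mul,
          integral_finset_sum _ (fun l _ => (hYX u l).const_mul _),
          integral_finset_sum _ (fun l _ =>
            integrable_finset_sum _ fun m _ => (hXX u l m).const_mul _)]
        have e1 : ∀ l : Fin p, (∫ a, β l * (Y u a * X u a l) ∂μ) = β l * c u l :=
          fun l => integral_const_mul _ _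
        have e2 : ∀ l : Fin p, (∫ a, ∑ m, β l * β m * (X u a l * X u a m) ∂μ)
            = ∑ m, β l * β m * G u l m := by
          intro l
          rw [integral_finset_sum _ (fun m _ => (hXX u l m).const_mul _)]
          exact Finset.sum_congr rfl fun m _ => integral_const_mul _ _
        simp_rw [e1, e2]
        rfl
  have hRnn : ∀ u β, 0 ≤ R u β := fun u β => integral_nonneg fun ω => sq_nonneg _
  -- continuity of affine combinations of risks
  have hcont : ∀ (κ : ℝ) (w : Fin k → ℝ), Continuous (fun β => κ + ∑ u, w u * R u β) := by
    intro κ w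
    have e : (fun β => κ + ∑ u, w u * R u β)
        = fun β => κ + ∑ u, w u *
            (A u - 2 * ∑ l, β l * c u l + ∑ l, ∑ m, β l * β m * G u l m) := by
      funext β; simp only [key]
    rw [e]
    refine continuous_const.add (continuous_finset_sum _ fun u _ =>
      continuous_const.mul (Continuous.add (Continuous.sub continuous_const
        (continuous_const.mul (continuous_finset_sum _ fun l _ =>
          (continuous_apply l).mul continuous_const)))
        (continuous_finset_sum _ fun l _ => continuous_finset_sum _ fun m _ =>
          ((continuous_apply l).mul (continuous_apply m)).mul continuous_const)))
  have hficont : Continuous fi := by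
    have e : fi = fun β => κi + ∑ u, wi u * R u β := funext hfi
    rw [e]; exact hcont κi wi
  have hfjcont : Continuous fj := by
    have e : fj = fun β => κj + ∑ u, wj u * R u β := funext hfj
    rw [e]; exact hcont κj wj
  have hKclosed : IsClosed {β : Fin p → ℝ | fi β = fj β} := isClosed_eq hficont hfjcont
  -- positive definiteness: coercivity constant
  have hnontriv : Nontrivial (Fin p → ℝ) := by
    refine ⟨0, fun _ => 1, fun h => ?_⟩
    have := congrFun h ⟨0, hp⟩
    norm_num at this
  have hquad : ∀ u0 : Fin k, ∃ m : ℝ, 0 < m ∧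
      ∀ β : Fin p → ℝ, m * ‖β‖ ^ 2 ≤ ∑ l, ∑ m', β l * β m' * G u0 l m' := by
    intro u0
    set q : (Fin p → ℝ) → ℝ := fun β => ∑ l, ∑ m', β l * β m' * G u0 l m' with hqdef
    have hqpos : ∀ β : Fin p → ℝ, β ≠ 0 → 0 < q β := by
      intro β hβ
      have h := (hG u0).dotProduct_mulVec_pos hβ
      have e : dotProduct (star β)
          (Matrix.mulVec (Matrix.of fun i j : Fin p => ∫ ω, X u0 ω i * X u0 ω j ∂μ) β)
          = q β := by
        simp only [dotProduct, Matrix.mulVec, Matrix.of_apply, star_trivial,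
          hqdef, Finset.mul_sum]
        exact Finset.sum_congr rfl fun l _ => Finset.sum_congr rfl fun m' _ => by ring
      rwa [e] at h
    have hqcont : Continuous q := by
      refine continuous_finset_sum _ fun l _ => continuous_finset_sum _ fun m' _ =>
        ((continuous_apply l).mul (continuous_apply m')).mul continuous_const
    obtain ⟨β₁, hβ₁s, hβ₁min⟩ := (isCompact_sphere (0 : Fin p → ℝ) 1).exists_isMinOn
      (NormedSpace.sphere_nonempty.mpr zero_le_one) hqcont.continuousOn
    have hβ₁norm : ‖β₁‖ = 1 := mem_sphere_zero_iff_norm.mp hβ₁s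
    have hβ₁ne : β₁ ≠ 0 := by
      intro h; rw [h] at hβ₁norm; simp at hβ₁norm
    refine ⟨q β₁, hqpos β₁ hβ₁ne, fun β => ?_⟩
    rcases eq_or_ne β 0 with rfl | hβ
    · simp [hqdef]
    · have ht : 0 < ‖β‖ := norm_pos_iff.mpr hβ
      have hunit : (‖β‖⁻¹ • β) ∈ Metric.sphere (0 : Fin p → ℝ) 1 := by
        rw [mem_sphere_zero_iff_norm, norm_smul, norm_inv, norm_norm,
          inv_mul_cancel₀ ht.ne']
      have h1 : q β₁ ≤ q (‖β‖⁻¹ • β) := hβ₁min hunit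
      have hscale : q (‖β‖⁻¹ • β) = ‖β‖⁻¹ ^ 2 * q β := by
        simp only [hqdef, Pi.smul_apply, smul_eq_mul, Finset.mul_sum]
        refine Finset.sum_congr rfl fun l _ => ?_
        exact Finset.sum_congr rfl fun m' _ => by ring
      rw [hscale] at h1
      have h2 := mul_le_mul_of_nonneg_left h1 (le_of_lt (by positivity : (0:ℝ) < ‖β‖ ^ 2))
      have hinv : ‖β‖ ^ 2 * ‖β‖⁻¹ ^ 2 = 1 := by
        field_simp
      calc q β₁ * ‖β‖ ^ 2 = ‖β‖ ^ 2 * q β₁ := by ring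
        _ ≤ ‖β‖ ^ 2 * (‖β‖⁻¹ ^ 2 * q β) := h2
        _ = (‖β‖ ^ 2 * ‖β‖⁻¹ ^ 2) * q β := by ring
        _ = q β := by rw [hinv, one_mul]
  -- the main argument for a coercive combination
  suffices H : ∀ (κ : ℝ) (w : Fin k → ℝ) (g : (Fin p → ℝ) → ℝ), 0 ≤ κ → (∀ u, 0 ≤ w u) →
      (∃ u, 0 < w u) → (∀ β, g β = κ + ∑ u, w u * R u β) →
      ∃ βstar ∈ {β : Fin p → ℝ | fi β = fj β},
        ∀ β ∈ {β : Fin p → ℝ | fi β = fj β}, g βstar ≤ g β by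
    rcases hpos with h | h
    · exact H κi wi fi hκi h.1 h.2 hfi
    · obtain ⟨βs, hβs, hmin⟩ := H κj wj fj hκj h.1 h.2 hfj
      refine ⟨βs, hβs, fun β hβ => ?_⟩
      have e1 : fi βs = fj βs := hβs
      have e2 : fi β = fj β := hβ
      rw [e1, e2]; exact hmin β hβ
  intro κ w g hκ hw hwex hg
  obtain ⟨u0, hu0⟩ := hwex
  obtain ⟨m, hm, hmq⟩ := hquad u0
  obtain ⟨β₀, hβ₀⟩ := hK
  set C : ℝ := ∑ l, |c u0 l| with hCdef
  have hC : 0 ≤ C := Finset.sum_nonneg fun l _ => abs_nonneg _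
  have hL : ∀ β : Fin p → ℝ, |∑ l, β l * c u0 l| ≤ C * ‖β‖ := by
    intro β
    calc |∑ l, β l * c u0 l| ≤ ∑ l, |β l * c u0 l| := Finset.abs_sum_le_sum_abs _ _
      _ ≤ ∑ l, ‖β‖ * |c u0 l| := by
          refine Finset.sum_le_sum fun l _ => ?_
          rw [abs_mul]
          refine mul_le_mul_of_nonneg_right ?_ (abs_nonneg _)
          simpa [Real.norm_eq_abs] using norm_le_pi_norm β l
      _ = C * ‖β‖ := by rw [← Finset.mul_sum, mul_comm]
  -- lower bound for g
  have hglb : ∀ β : Fin p → ℝ,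
      w u0 * (A u0 - 2 * (C * ‖β‖) + m * ‖β‖ ^ 2) ≤ g β := by
    intro β
    have h1 : w u0 * R u0 β ≤ ∑ u, w u * R u β :=
      Finset.single_le_sum (f := fun u => w u * R u β)
        (fun u _ => mul_nonneg (hw u) (hRnn u β)) (Finset.mem_univ u0)
    have h2 : A u0 - 2 * (C * ‖β‖) + m * ‖β‖ ^ 2 ≤ R u0 β := by
      rw [key u0 β]
      have h3 := hmq β
      have h4 := (abs_le.mp (hL β)).2
      linarith
    calc w u0 * (A u0 - 2 * (C * ‖β‖) + m * ‖β‖ ^ 2) ≤ w u0 * R u0 β :=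
        mul_le_mul_of_nonneg_left h2 (le_of_lt hu0)
      _ ≤ ∑ u, w u * R u β := h1
      _ ≤ κ + ∑ u, w u * R u β := by linarith
      _ = g β := (hg β).symm
  -- sublevel set is bounded
  set E : ℝ := g β₀ / w u0 - A u0 with hEdef
  set r : ℝ := (|E| + 2 * C) / m + 1 with hrdef
  have hbound : ∀ β : Fin p → ℝ, g β ≤ g β₀ → ‖β‖ ≤ r := by
    intro β hβ
    by_contra hcon
    push_neg at hcon
    set t : ℝ := ‖β‖ with htdef
    have h1 : w u0 * (A u0 - 2 * (C * t) + m * t ^ 2) ≤ g β₀ := le_trans (hglb β) hβ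
    have h2 : m * t ^ 2 ≤ E + 2 * C * t := by
      have hT : A u0 - 2 * (C * t) + m * t ^ 2 ≤ g β₀ / w u0 :=
        (le_div_iff₀ hu0).mpr (by linarith)
      rw [hEdef]; linarith
    have h3 : (|E| + 2 * C) / m + 1 < t := hcon
    have h4 : |E| + 2 * C + m ≤ m * t := by
      have h3' : (|E| + 2 * C) / m < t - 1 := by linarith
      have := (div_lt_iff₀ hm).mp h3'
      nlinarith
    have ht1 : 1 ≤ t := by nlinarith [abs_nonneg E, hC, h4, hm]
    have hE := le_abs_self E
    nlinarith [mul_le_mul_of_nonneg_right h4 (le_trans zero_le_one ht1),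
      abs_nonneg E]
  -- extract minimizer on compact sublevel set
  set K : Set (Fin p → ℝ) := {β : Fin p → ℝ | fi β = fj β} with hKdef
  have hgcont : Continuous g := by
    have e : g = fun β => κ + ∑ u, w u * R u β := funext hg
    rw [e]; exact hcont κ w
  set S : Set (Fin p → ℝ) := K ∩ {β | g β ≤ g β₀} with hSdef
  have hSclosed : IsClosed S := hKclosed.inter (isClosed_le hgcont continuous_const)
  have hSbdd : Bornology.IsBounded S := by
    refine (Metric.isBounded_closedBall (x := (0 : Fin p → ℝ)) (r := r)).subset ?_
    intro β hβ
    rw [Metric.mem_closedBall, dist_zero_right]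
    exact hbound β hβ.2
  have hScompact : IsCompact S := Metric.isCompact_of_isClosed_isBounded hSclosed hSbdd
  have hSne : S.Nonempty := ⟨β₀, ⟨hβ₀, le_refl (g β₀)⟩⟩
  obtain ⟨βs, hβsS, hβsmin⟩ := hScompact.exists_isMinOn hSne hgcont.continuousOn
  refine ⟨βs, hβsS.1, fun β hβ => ?_⟩
  by_cases hle : g β ≤ g β₀
  · exact hβsmin ⟨hβ, hle⟩
  · exact le_trans (hβsmin ⟨hβ₀, le_refl (g β₀)⟩) (le_of_not_ge hle)
end
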